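/- Let G be a finite simple graph on Fin n, let d ≥ 1, r ≥ 1, and let c : Fin n → ℝ be arbitrary real coefficients. Let ρ₁, ρ₂ be Hermitian d×d complex matrices such that ρ₁ = ∑_{j=1}^{m} p_j · (U_j * ρ₂ * U_j†) for some probability weights p_j ≥ 0 with ∑_j p_j = 1 and unitary matrices U_j. Then for every family Π : Fin n → Matrix (Fin d) (Fin d) ℂ of rank-r orthogonal projections realizing G, there exists a family Π' of rank-r orthogonal projections realizing G such that ∑_k c_k · Re(tr(Π'_k * ρ₂)) ≥ ∑_k c_k · Re(tr(Π_k * ρ₁)). (Violations of noncontextuality inequalities, optimized over realizations, are monotone under mixing of unitary conjugates, and hence follow the majorization order of spectra.) -/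

import Mathlib

open Matrix
open scoped ComplexOrder

/-- A finset of vertices is independent: no two of its vertices are adjacent. -/
def IsIndep {n : ℕ} (G : SimpleGraph (Fin n)) (s : Finset (Fin n)) : Prop :=
  ∀ v ∈ s, ∀ u ∈ s, ¬ G.Adj v u

/-- Incidence vector of a finset of vertices. -/
def incVec {n : ℕ} (s : Finset (Fin n)) : Fin n → ℝ := fun v => if v ∈ s then 1 else 0

/-- STAB(G): the convex hull of the incidence vectors of the independent sets of `G`. -/
def STAB {n : ℕ} (G : SimpleGraph (Fin n)) : Set (Fin n → ℝ) :=
  convexHull ℝ {x | ∃ s : Finset (Fin n), IsIndep G s ∧ x = incVec s}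

/-- A fractional coloring of `G`: nonnegative weights supported on independent sets,
covering every vertex with total weight at least 1. -/
def IsFracColoring {n : ℕ} (G : SimpleGraph (Fin n)) (w : Finset (Fin n) → ℝ) : Prop :=
  (∀ s, 0 ≤ w s) ∧ (∀ s, w s ≠ 0 → IsIndep G s) ∧
    (∀ v : Fin n, 1 ≤ ∑ s : Finset (Fin n), if v ∈ s then w s else 0)

/-- Total weight of a weight assignment on independent sets. -/
def totalWeight {n : ℕ} (w : Finset (Fin n) → ℝ) : ℝ := ∑ s : Finset (Fin n), w s

/-- `P` is an orthogonal projection of rank `r`: Hermitian, idempotent, of rank `r`. -/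
def IsProjOfRank {d : ℕ} (r : ℕ) (P : Matrix (Fin d) (Fin d) ℂ) : Prop :=
  P.IsHermitian ∧ P * P = P ∧ P.rank = r

/-- A family of projectors realizes the orthogonality graph `G`:
adjacent vertices carry orthogonal projectors. -/
def Realizes {n d : ℕ} (G : SimpleGraph (Fin n)) (P : Fin n → Matrix (Fin d) (Fin d) ℂ) : Prop :=
  ∀ j k, G.Adj j k → P j * P k = 0

theorem stmt8 {n d : ℕ} (G : SimpleGraph (Fin n)) (r : ℕ) (hd : 1 ≤ d) (hr : 1 ≤ r)
    (c : Fin n → ℝ) (ρ₁ ρ₂ : Matrix (Fin d) (Fin d) ℂ)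
    (h₁ : ρ₁.IsHermitian) (h₂ : ρ₂.IsHermitian)
    (m : ℕ) (p : Fin m → ℝ) (hp : ∀ j, 0 ≤ p j) (hps : ∑ j, p j = 1)
    (U : Fin m → Matrix (Fin d) (Fin d) ℂ)
    (hU : ∀ j, U j ∈ Matrix.unitaryGroup (Fin d) ℂ)
    (hmix : ρ₁ = ∑ j : Fin m, p j • (U j * ρ₂ * (U j)ᴴ)) :
    ∀ P : Fin n → Matrix (Fin d) (Fin d) ℂ,
      (∀ k, IsProjOfRank r (P k)) → Realizes G P →
        ∃ P' : Fin n → Matrix (Fin d) (Fin d) ℂ,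
          (∀ k, IsProjOfRank r (P' k)) ∧ Realizes G P' ∧
          ∑ k : Fin n, c k * ((P k * ρ₁).trace).re ≤
            ∑ k : Fin n, c k * ((P' k * ρ₂).trace).re := by
  intro P hP hReal
  -- unitarity facts
  have hUU : ∀ j, (U j)ᴴ * U j = 1 := fun j => by
    simpa [Matrix.star_eq_conjTranspose] using (Matrix.mem_unitaryGroup_iff'.mp (hU j))
  have hUU' : ∀ j, U j * (U j)ᴴ = 1 := fun j => by
    simpa [Matrix.star_eq_conjTranspose] using (Matrix.mem_unitaryGroup_iff.mp (hU j))
  -- the value obtained by conjugating by U j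
  set f : Fin m → ℝ := fun j => ∑ k : Fin n, c k * (((U j)ᴴ * P k * U j * ρ₂).trace).re with hf
  -- m is nonempty
  have hm : Nonempty (Fin m) := by
    by_contra h
    rw [Finset.sum_eq_zero (fun j _ => absurd ⟨j⟩ h)] at hps
    exact one_ne_zero hps.symm
  obtain ⟨j₀, -, hj₀⟩ := Finset.exists_max_image (Finset.univ : Finset (Fin m)) f
    ⟨hm.some, Finset.mem_univ _⟩
  -- key trace identity
  have htr : ∀ j k, ((P k * (U j * ρ₂ * (U j)ᴴ)).trace) = (((U j)ᴴ * P k * U j * ρ₂).trace) := by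
    intro j k
    calc (P k * (U j * ρ₂ * (U j)ᴴ)).trace
        = ((P k * U j * ρ₂) * (U j)ᴴ).trace := by simp only [Matrix.mul_assoc]
      _ = ((U j)ᴴ * (P k * U j * ρ₂)).trace := Matrix.trace_mul_comm _ _
      _ = (((U j)ᴴ * P k * U j * ρ₂)).trace := by simp only [Matrix.mul_assoc]
  -- LHS equals convex combination of f
  have hLHS : ∑ k : Fin n, c k * ((P k * ρ₁).trace).re = ∑ j : Fin m, p j * f j := by
    have : ∀ k, ((P k * ρ₁).trace).re
        = ∑ j : Fin m, p j * (((U j)ᴴ * P k * U j * ρ₂).trace).re := by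
      intro k
      rw [hmix, Finset.mul_sum, Matrix.trace_sum]
      rw [Complex.re_sum]
      refine Finset.sum_congr rfl fun j _ => ?_
      rw [Matrix.mul_smul, Matrix.trace_smul, Complex.real_smul, Complex.mul_re]
      simp [htr j k]
    simp_rw [this, Finset.mul_sum]
    rw [Finset.sum_comm]
    refine Finset.sum_congr rfl fun j _ => ?_
    rw [hf, Finset.mul_sum]
    refine Finset.sum_congr rfl fun k _ => ?_
    ring
  -- bound by max
  have hbound : ∑ j : Fin m, p j * f j ≤ f j₀ := by
    calc ∑ j : Fin m, p j * f j ≤ ∑ j : Fin m, p j * f j₀ :=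
          Finset.sum_le_sum fun j _ =>
            mul_le_mul_of_nonneg_left (hj₀ j (Finset.mem_univ j)) (hp j)
      _ = f j₀ := by rw [← Finset.sum_mul, hps, one_mul]
  refine ⟨fun k => (U j₀)ᴴ * P k * U j₀, ?_, ?_, ?_⟩
  · intro k
    obtain ⟨hH, hI, hR⟩ := hP k
    refine ⟨?_, ?_, ?_⟩
    · show ((U j₀)ᴴ * P k * U j₀)ᴴ = _
      rw [Matrix.conjTranspose_mul, Matrix.conjTranspose_mul, Matrix.conjTranspose_conjTranspose,
        hH.eq]
      simp only [Matrix.mul_assoc]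
    · calc (U j₀)ᴴ * P k * U j₀ * ((U j₀)ᴴ * P k * U j₀)
          = (U j₀)ᴴ * P k * (U j₀ * (U j₀)ᴴ) * P k * U j₀ := by
            simp only [Matrix.mul_assoc]
        _ = (U j₀)ᴴ * P k * U j₀ := by
            rw [hUU' j₀, Matrix.mul_one, Matrix.mul_assoc ((U j₀)ᴴ * P k), ← Matrix.mul_assoc,
              Matrix.mul_assoc ((U j₀)ᴴ), hI]
    · have hdet : IsUnit (U j₀).det :=
        IsUnit.of_mul_eq_one _ (by rw [← Matrix.det_mul, hUU' j₀, Matrix.det_one])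
      have hdet' : IsUnit ((U j₀)ᴴ).det :=
        IsUnit.of_mul_eq_one _ (by rw [← Matrix.det_mul, hUU j₀, Matrix.det_one])
      rw [Matrix.rank_mul_eq_left_of_isUnit_det _ _ hdet,
        Matrix.rank_mul_eq_right_of_isUnit_det _ _ hdet', hR]
  · intro j k hadj
    calc (U j₀)ᴴ * P j * U j₀ * ((U j₀)ᴴ * P k * U j₀)
        = (U j₀)ᴴ * P j * (U j₀ * (U j₀)ᴴ) * P k * U j₀ := by simp only [Matrix.mul_assoc]
      _ = (U j₀)ᴴ * (P j * P k) * U j₀ := by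
          rw [hUU' j₀, Matrix.mul_one, Matrix.mul_assoc ((U j₀)ᴴ), Matrix.mul_assoc ((U j₀)ᴴ)]
      _ = 0 := by rw [hReal j k hadj]; simp
  · rw [hLHS]
    exact hbound
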